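/- Let p be a prime, r a positive integer, and γ = (γ₁₁ γ₁₂; γ₂₁ γ₂₂) ∈ SL₂(ℤ). Then the number of cosets in SL₂(ℤ)/Γ₀(p^r) fixed by left multiplication by γ equals #{m ∈ ℤ/p^rℤ : γ₁₂m² + (γ₁₁ − γ₂₂)m − γ₂₁ ≡ 0 mod p^r} + #{l ∈ ℤ/p^{r-1}ℤ : γ₂₁p²l² + p(γ₁₁ − γ₂₂)l − γ₁₂ ≡ 0 mod p^r}. -/
import Mathlib

open Matrix CongruenceSubgroup

namespace Stmt12Helper

/-- lower triangular unipotent -/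
def T (n : ℤ) : Matrix.SpecialLinearGroup (Fin 2) ℤ :=
  ⟨!![1, 0; n, 1], by simp [Matrix.det_fin_two_of]⟩

/-- matrix with first column (-(q*n), 1) -/
def B (q n : ℤ) : Matrix.SpecialLinearGroup (Fin 2) ℤ :=
  ⟨!![-(q * n), -1; 1, 0], by simp [Matrix.det_fin_two_of]⟩

@[simp] lemma T00 (n : ℤ) : (T n).1 0 0 = 1 := rfl
@[simp] lemma T10 (n : ℤ) : (T n).1 1 0 = n := rfl
@[simp] lemma B00 (q n : ℤ) : (B q n).1 0 0 = -(q * n) := rfl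
@[simp] lemma B10 (q n : ℤ) : (B q n).1 1 0 = 1 := rfl

lemma lowerLeft (g h : Matrix.SpecialLinearGroup (Fin 2) ℤ) :
    (g⁻¹ * h).1 1 0 = -(g.1 1 0) * h.1 0 0 + g.1 0 0 * h.1 1 0 := by
  have h1 : (g⁻¹ * h).1 = (g⁻¹).1 * h.1 := rfl
  have h2 : (g⁻¹).1 = Matrix.adjugate g.1 := Matrix.SpecialLinearGroup.coe_inv g
  rw [h1, h2, Matrix.adjugate_fin_two]
  simp only [Matrix.mul_apply, Fin.sum_univ_two]
  simp


lemma coset_eq_iff (N : ℕ) (g h : Matrix.SpecialLinearGroup (Fin 2) ℤ) :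
    (QuotientGroup.mk g : Matrix.SpecialLinearGroup (Fin 2) ℤ ⧸ Gamma0 N)
        = QuotientGroup.mk h ↔
      ((-(g.1 1 0) * h.1 0 0 + g.1 0 0 * h.1 1 0 : ℤ) : ZMod N) = 0 := by
  rw [QuotientGroup.eq]
  have : (g⁻¹ * h ∈ Gamma0 N) ↔ (((g⁻¹ * h).1 1 0 : ℤ) : ZMod N) = 0 := Gamma0_mem
  rw [this, lowerLeft]

lemma smul_coset_eq_iff (N : ℕ) (γ g : Matrix.SpecialLinearGroup (Fin 2) ℤ) :
    γ • (QuotientGroup.mk g : Matrix.SpecialLinearGroup (Fin 2) ℤ ⧸ Gamma0 N)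
        = QuotientGroup.mk g ↔
      ((γ.1 1 0 * g.1 0 0 ^ 2 + (γ.1 1 1 - γ.1 0 0) * (g.1 0 0 * g.1 1 0)
          - γ.1 0 1 * g.1 1 0 ^ 2 : ℤ) : ZMod N) = 0 := by
  have h1 : γ • (QuotientGroup.mk g :
      Matrix.SpecialLinearGroup (Fin 2) ℤ ⧸ Gamma0 N) = QuotientGroup.mk (γ * g) := rfl
  rw [h1, eq_comm, coset_eq_iff]
  have e : -(g.1 1 0) * (γ * g).1 0 0 + g.1 0 0 * (γ * g).1 1 0
      = γ.1 1 0 * g.1 0 0 ^ 2 + (γ.1 1 1 - γ.1 0 0) * (g.1 0 0 * g.1 1 0)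
          - γ.1 0 1 * g.1 1 0 ^ 2 := by
    have : (γ * g).1 = γ.1 * g.1 := rfl
    rw [this]
    simp only [Matrix.mul_apply, Fin.sum_univ_two]
    ring
  rw [e]

end Stmt12Helper

open Stmt12Helper in
theorem stmt12 (p r : ℕ) (hp : p.Prime) (hr : 0 < r)
    (γ : Matrix.SpecialLinearGroup (Fin 2) ℤ) :
    Nat.card {x : Matrix.SpecialLinearGroup (Fin 2) ℤ ⧸ CongruenceSubgroup.Gamma0 (p ^ r) //
        γ • x = x} =
      Nat.card {m : ZMod (p ^ r) //
          (γ.1 0 1 : ZMod (p ^ r)) * m ^ 2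
            + ((γ.1 0 0 : ZMod (p ^ r)) - (γ.1 1 1 : ZMod (p ^ r))) * m
            - (γ.1 1 0 : ZMod (p ^ r)) = 0} +
      Nat.card {l : ZMod (p ^ (r - 1)) //
          (p ^ r : ℤ) ∣ γ.1 1 0 * (p : ℤ) ^ 2 * (l.val : ℤ) ^ 2
            + (p : ℤ) * (γ.1 0 0 - γ.1 1 1) * (l.val : ℤ) - γ.1 0 1} := by
  classical
  haveI : NeZero (p ^ r) := ⟨pow_ne_zero r hp.ne_zero⟩
  haveI : NeZero (p ^ (r - 1)) := ⟨pow_ne_zero _ hp.ne_zero⟩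
  set N := p ^ r with hNdef
  -- notation
  set S1 := {m : ZMod N //
      (γ.1 0 1 : ZMod N) * m ^ 2
        + ((γ.1 0 0 : ZMod N) - (γ.1 1 1 : ZMod N)) * m - (γ.1 1 0 : ZMod N) = 0} with hS1
  set S2 := {l : ZMod (p ^ (r - 1)) //
      (p ^ r : ℤ) ∣ γ.1 1 0 * (p : ℤ) ^ 2 * (l.val : ℤ) ^ 2
        + (p : ℤ) * (γ.1 0 0 - γ.1 1 1) * (l.val : ℤ) - γ.1 0 1} with hS2
  have hprr : (p : ℤ) ^ r = ((N : ℕ) : ℤ) := by push_cast [hNdef]; ring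
  have hNp : (p : ℤ) ∣ (N : ℤ) := by
    rw [← hprr]; exact dvd_pow_self _ hr.ne'
  -- the map
  have hfix1 : ∀ m : S1, γ • (QuotientGroup.mk (T (m.1.val : ℤ)) :
      Matrix.SpecialLinearGroup (Fin 2) ℤ ⧸ Gamma0 N) = QuotientGroup.mk (T (m.1.val : ℤ)) := by
    rintro ⟨m, hm⟩
    rw [smul_coset_eq_iff]
    simp only [T00, T10]
    push_cast
    simp only [ZMod.natCast_val, ZMod.cast_id]
    linear_combination -hm
  have hfix2 : ∀ l : S2, γ • (QuotientGroup.mk (B (p : ℤ) (l.1.val : ℤ)) :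
      Matrix.SpecialLinearGroup (Fin 2) ℤ ⧸ Gamma0 N) = QuotientGroup.mk (B (p : ℤ) (l.1.val : ℤ)) := by
    rintro ⟨l, hl⟩
    rw [smul_coset_eq_iff]
    simp only [B00, B10]
    have e : γ.1 1 0 * (-((p : ℤ) * (l.val : ℤ))) ^ 2
        + (γ.1 1 1 - γ.1 0 0) * (-((p : ℤ) * (l.val : ℤ)) * 1) - γ.1 0 1 * 1 ^ 2
        = γ.1 1 0 * (p : ℤ) ^ 2 * (l.val : ℤ) ^ 2
            + (p : ℤ) * (γ.1 0 0 - γ.1 1 1) * (l.val : ℤ) - γ.1 0 1 := by ring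
    rw [e, ZMod.intCast_zmod_eq_zero_iff_dvd, ← hprr]
    exact hl
  let F : S1 ⊕ S2 → {x : Matrix.SpecialLinearGroup (Fin 2) ℤ ⧸ Gamma0 N // γ • x = x} :=
    Sum.elim (fun m => ⟨QuotientGroup.mk (T (m.1.val : ℤ)), hfix1 m⟩)
      (fun l => ⟨QuotientGroup.mk (B (p : ℤ) (l.1.val : ℤ)), hfix2 l⟩)
  have hpne : (p : ℤ) ≠ 0 := by exact_mod_cast hp.ne_zero
  have hppow : (p : ℤ) ^ r = (p : ℤ) * (p : ℤ) ^ (r - 1) := by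
    conv_lhs => rw [show r = 1 + (r - 1) by omega]
    rw [pow_add, pow_one]
  have hnotp1 : ¬ ((p : ℤ) ∣ 1) := by
    intro h
    have h1 := Int.le_of_dvd one_pos h
    have h2 := hp.two_le
    omega
  have Finj : Function.Injective F := by
    rintro (⟨m, hm⟩ | ⟨l, hl⟩) (⟨m', hm'⟩ | ⟨l', hl'⟩) hxy <;>
      have h := congrArg Subtype.val hxy <;>
      simp only [F, Sum.elim_inl, Sum.elim_inr] at h <;>
      rw [coset_eq_iff] at h
    · -- T vs T
      simp only [T00, T10] at h
      push_cast at h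
      simp only [ZMod.natCast_val, ZMod.cast_id] at h
      have : m = m' := by linear_combination -h
      simp [this]
    · -- T vs B : contradiction
      exfalso
      simp only [T00, T10, B00, B10] at h
      rw [ZMod.intCast_zmod_eq_zero_iff_dvd] at h
      rw [← hprr, hppow] at h
      obtain ⟨k, hk⟩ := h
      apply hnotp1
      refine ⟨(p : ℤ) ^ (r - 1) * k - (m.val : ℤ) * (l'.val : ℤ), ?_⟩
      linear_combination hk
    · -- B vs T : contradiction
      exfalso
      simp only [T00, T10, B00, B10] at h
      rw [ZMod.intCast_zmod_eq_zero_iff_dvd] at h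
      rw [← hprr, hppow] at h
      obtain ⟨k, hk⟩ := h
      apply hnotp1
      refine ⟨-((p:ℤ) ^ (r - 1) * k) - (m'.val : ℤ) * (l.val : ℤ), ?_⟩
      linear_combination -hk
    · -- B vs B
      simp only [B00, B10] at h
      rw [ZMod.intCast_zmod_eq_zero_iff_dvd, ← hprr, hppow] at h
      have h2 : (p:ℤ) ^ (r-1) ∣ ((l'.val : ℤ) - (l.val : ℤ)) := by
        obtain ⟨k, hk⟩ := h
        refine ⟨k, mul_left_cancel₀ hpne ?_⟩
        linear_combination hk
      have h3 : (((l'.val : ℤ) - (l.val : ℤ) : ℤ) : ZMod (p ^ (r-1))) = 0 := by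
        rw [ZMod.intCast_zmod_eq_zero_iff_dvd]
        exact_mod_cast h2
      push_cast at h3
      simp only [ZMod.natCast_val, ZMod.cast_id] at h3
      have : l = l' := by linear_combination -h3
      simp [this]
  have Fsurj : Function.Surjective F := by
    rintro ⟨x, hx⟩
    obtain ⟨g, rfl⟩ := QuotientGroup.mk_surjective x
    have E := (smul_coset_eq_iff N γ g).mp hx
    push_cast at E
    set u : ZMod N := ((g.1 0 0 : ℤ) : ZMod N) with hu_def
    set v : ZMod N := ((g.1 1 0 : ℤ) : ZMod N) with hv_def
    have hdet : g.1 0 0 * g.1 1 1 - g.1 0 1 * g.1 1 0 = 1 := by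
      have := g.2
      rwa [Matrix.det_fin_two] at this
    have hcop : ∀ z : ℤ, ¬ (p:ℤ) ∣ z → ∃ w : ZMod N, ((z : ℤ) : ZMod N) * w = 1 := by
      intro z hz
      have hcp : IsCoprime (p : ℤ) z := (Prime.coprime_iff_not_dvd (Nat.prime_iff_prime_int.mp hp)).mpr hz
      have hcpr : IsCoprime z ((p:ℤ)^r) := (hcp.pow_left).symm
      obtain ⟨x, y, hxy⟩ := hcpr
      refine ⟨((x : ℤ) : ZMod N), ?_⟩
      have := congrArg (fun t : ℤ => ((t : ℤ) : ZMod N)) hxy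
      push_cast at this
      have h0 : ((p : ZMod N)) ^ r = 0 := by
        have := ZMod.natCast_self N
        rw [hNdef] at this
        push_cast at this
        rw [hNdef]
        exact this
      rw [h0] at this
      linear_combination this
    by_cases hpa : (p : ℤ) ∣ g.1 0 0
    · -- second piece
      have hpc : ¬ (p:ℤ) ∣ g.1 1 0 := by
        intro hc
        exact hnotp1 (hdet ▸ dvd_sub (hpa.mul_right _) (hc.mul_left _))
      obtain ⟨w, hw⟩ := hcop _ hpc
      obtain ⟨a₀, ha⟩ := hpa
      set ξ : ZMod N := -(((a₀ : ℤ) : ZMod N)) * w with hξ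
      set l : ZMod (p ^ (r - 1)) := ((ξ.val : ℕ) : ZMod (p ^ (r - 1))) with hl_def
      -- key congruence : p * l.val = p * ξ in ZMod N
      have hmod : (p * l.val) ≡ (p * ξ.val) [MOD p ^ r] := by
        have h1 : l.val ≡ ξ.val [MOD p ^ (r-1)] := by
          rw [hl_def, ZMod.val_natCast]
          exact Nat.mod_modEq _ _
        have h2 := h1.mul_left' (c := p)
        rwa [show p * p ^ (r-1) = p ^ r by
          conv_rhs => rw [show r = 1 + (r-1) by omega]
          rw [pow_add, pow_one]] at h2
      have hs : (p : ZMod N) * ((l.val : ℕ) : ZMod N) = (p : ZMod N) * ξ := by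
        have h4 := (ZMod.natCast_eq_natCast_iff _ _ _).mpr hmod
        rw [← hNdef] at h4
        push_cast at h4
        rw [h4]
        simp [ZMod.natCast_val, ZMod.cast_id]
      have hS : (p : ZMod N) * ((l.val : ℕ) : ZMod N) = -(u * w) := by
        rw [hs, hξ]
        have : u = (p : ZMod N) * ((a₀ : ℤ) : ZMod N) := by
          rw [hu_def, ha]; push_cast; ring
        rw [this]; ring
      have hl2 : (p ^ r : ℤ) ∣ γ.1 1 0 * (p : ℤ) ^ 2 * (l.val : ℤ) ^ 2
          + (p : ℤ) * (γ.1 0 0 - γ.1 1 1) * (l.val : ℤ) - γ.1 0 1 := by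
        rw [hprr, ← ZMod.intCast_zmod_eq_zero_iff_dvd]
        push_cast
        linear_combination (((γ.1 1 0 : ℤ) : ZMod N) * ((p : ZMod N) * ((l.val : ℕ) : ZMod N) - u * w)
            + (((γ.1 0 0 : ℤ) : ZMod N) - ((γ.1 1 1 : ℤ) : ZMod N))) * hS
          + w ^ 2 * E
          + ((((γ.1 0 0 : ℤ) : ZMod N) - ((γ.1 1 1 : ℤ) : ZMod N)) * u * w
            + ((γ.1 0 1 : ℤ) : ZMod N) * (v * w + 1)) * hw
      refine ⟨Sum.inr ⟨l, hl2⟩, ?_⟩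
      apply Subtype.ext
      show (QuotientGroup.mk (B (p : ℤ) (l.val : ℤ)) :
        Matrix.SpecialLinearGroup (Fin 2) ℤ ⧸ Gamma0 N) = QuotientGroup.mk g
      rw [coset_eq_iff]
      simp only [B00, B10]
      push_cast
      linear_combination (-v) * hS + u * hw
    · -- first piece
      obtain ⟨w, hw⟩ := hcop _ hpa
      set m : ZMod N := v * w with hm_def
      have hm : (γ.1 0 1 : ZMod N) * m ^ 2
          + ((γ.1 0 0 : ZMod N) - (γ.1 1 1 : ZMod N)) * m - (γ.1 1 0 : ZMod N) = 0 := by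
        rw [hm_def]
        linear_combination (-(w^2)) * E
          + (((γ.1 1 0 : ℤ) : ZMod N) * (1 + u * w)
             - (((γ.1 0 0 : ℤ) : ZMod N) - ((γ.1 1 1 : ℤ) : ZMod N)) * v * w) * hw
      refine ⟨Sum.inl ⟨m, hm⟩, ?_⟩
      apply Subtype.ext
      show (QuotientGroup.mk (T (m.val : ℤ)) :
        Matrix.SpecialLinearGroup (Fin 2) ℤ ⧸ Gamma0 N) = QuotientGroup.mk g
      rw [coset_eq_iff]
      simp only [T00, T10]
      push_cast
      simp only [ZMod.natCast_val, ZMod.cast_id]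
      rw [hm_def]
      linear_combination (-v) * hw
  have e : (S1 ⊕ S2) ≃ {x : Matrix.SpecialLinearGroup (Fin 2) ℤ ⧸ Gamma0 N // γ • x = x} :=
    Equiv.ofBijective F ⟨Finj, Fsurj⟩
  rw [Nat.card_congr e.symm, Nat.card_sum]
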